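/- Let P, V, R be finite sets with |P| ≥ 2, let π : V → P be a surjective map, and let μ : V → ℤ assign to each v ∈ V a positive integer μ(v). Work in ℚ^{V⊔R} with standard basis vectors e(v), e(ρ), define for each p ∈ P the polytope Δ_p^c := conv{ e(v)/μ(v) : v ∈ π⁻¹(p) }, and set σ := ℚ_{≥0}·(∑_{p∈P} Δ_p^c) + ℚ^R_{≥0} (Minkowski sum). Fix p₀ ∈ P. Then for a componentwise-nonnegative vector x ∈ ℚ^{V⊔R}, the conditions that the weighted fiber sums ∑_{v ∈ π⁻¹(q)} μ(v)·x_v take a common value c for all q ≠ p₀ while ∑_{v ∈ π⁻¹(p₀)} μ(v)·x_v = c + 1, hold if and only if x ∈ Δ_{p₀}^c + σ. In other words, Δ_{p₀}^c + σ = Q⁻¹(ē(p₀)) ∩ ℚ^{V⊔R}_{≥0}, where Q : ℚ^{V⊔R} → ℚ^P/ℚ·(1,…,1) is the linear map with Q(e(v)) = μ(v)·ē(π(v)) and Q(e(ρ)) = 0. -/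

import Mathlib

open Finset

section Helpers

variable {P V W : Type} [Fintype P] [Fintype V] [Fintype W]
  [DecidableEq P] [DecidableEq V] [DecidableEq W]

/-- The weighted fiber sum over `q`, as a linear map. -/
private def fiberSum (π : V → P) (μ : V → ℕ) (q : P) : ((V ⊕ W) → ℚ) →ₗ[ℚ] ℚ where
  toFun y := ∑ v ∈ univ.filter (fun v => π v = q), (μ v : ℚ) * y (Sum.inl v)
  map_add' a b := by
    simp only [Pi.add_apply, mul_add, Finset.sum_add_distrib]
  map_smul' r a := by
    simp only [Pi.smul_apply, smul_eq_mul, RingHom.id_apply, Finset.mul_sum]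
    exact Finset.sum_congr rfl (by intros; ring)

private lemma fiberSum_point (π : V → P) (μ : V → ℕ) (hμ : ∀ v, 0 < μ v) (q : P) (v : V) :
    fiberSum (W := W) π μ q ((μ v : ℚ)⁻¹ • (Pi.single (Sum.inl v) 1 : V ⊕ W → ℚ)) =
      if π v = q then (1 : ℚ) else 0 := by
  have hne : (μ v : ℚ) ≠ 0 := by exact_mod_cast (hμ v).ne'
  simp only [fiberSum, LinearMap.coe_mk, AddHom.coe_mk, Pi.smul_apply, smul_eq_mul]
  have : ∀ u : V, (μ u : ℚ) * ((μ v : ℚ)⁻¹ * (Pi.single (Sum.inl v) 1 : V ⊕ W → ℚ) (Sum.inl u))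
      = if u = v then (μ u : ℚ) * (μ v : ℚ)⁻¹ else 0 := by
    intro u
    by_cases h : u = v
    · subst h; simp [Pi.single_apply]
    · simp [Pi.single_apply, Sum.inl.injEq, h]
  rw [Finset.sum_congr rfl fun u _ => this u, Finset.sum_ite_eq' _ v]
  by_cases h : π v = q
  · simp [h, mul_inv_cancel₀ hne]
  · simp [h]

private lemma fiberSum_hull (π : V → P) (μ : V → ℕ) (hμ : ∀ v, 0 < μ v) (p q : P)
    {y : V ⊕ W → ℚ}
    (hy : y ∈ convexHull ℚ
      ((fun v : V => (μ v : ℚ)⁻¹ • (Pi.single (Sum.inl v) 1 : V ⊕ W → ℚ)) ''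
        {v : V | π v = p})) :
    fiberSum (W := W) π μ q y = if p = q then (1 : ℚ) else 0 := by
  have hconv : Convex ℚ {w : V ⊕ W → ℚ |
      fiberSum (W := W) π μ q w = if p = q then (1 : ℚ) else 0} :=
    convex_hyperplane (fiberSum (W := W) π μ q).isLinear _
  have hsub : ((fun v : V => (μ v : ℚ)⁻¹ • (Pi.single (Sum.inl v) 1 : V ⊕ W → ℚ)) ''
      {v : V | π v = p}) ⊆ {w : V ⊕ W → ℚ |
      fiberSum (W := W) π μ q w = if p = q then (1 : ℚ) else 0} := by
    rintro _ ⟨v, hv, rfl⟩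
    have h := fiberSum_point (W := W) π μ hμ q v
    rw [Set.mem_setOf_eq] at hv
    rw [hv] at h
    exact h
  exact convexHull_min hsub hconv hy

/-- Membership in the convex hull from a nonnegative weight function with weighted sum 1. -/
private lemma mem_hull_of_weights (π : V → P) (μ : V → ℕ) (hμ : ∀ v, 0 < μ v) (p : P)
    (g : V → ℚ) (hg : ∀ v, 0 ≤ g v)
    (hsum : ∑ v ∈ univ.filter (fun v => π v = p), (μ v : ℚ) * g v = 1) :
    (Sum.elim (fun v => if π v = p then g v else 0) 0 : V ⊕ W → ℚ) ∈ convexHull ℚ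
      ((fun v : V => (μ v : ℚ)⁻¹ • (Pi.single (Sum.inl v) 1 : V ⊕ W → ℚ)) ''
        {v : V | π v = p}) := by
  set t := univ.filter (fun v : V => π v = p) with ht
  have hw : ∀ v ∈ t, (0 : ℚ) ≤ (μ v : ℚ) * g v := fun v _ =>
    mul_nonneg (by positivity) (hg v)
  have hws : (0 : ℚ) < ∑ v ∈ t, (μ v : ℚ) * g v := by rw [hsum]; norm_num
  have hz : ∀ v ∈ t, ((μ v : ℚ)⁻¹ • (Pi.single (Sum.inl v) 1 : V ⊕ W → ℚ)) ∈
      ((fun v : V => (μ v : ℚ)⁻¹ • (Pi.single (Sum.inl v) 1 : V ⊕ W → ℚ)) ''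
        {v : V | π v = p}) := by
    intro v hv
    exact ⟨v, by simpa [ht] using hv, rfl⟩
  have hmem := Finset.centerMass_mem_convexHull t hw hws hz
  have heq : t.centerMass (fun v => (μ v : ℚ) * g v)
      (fun v => (μ v : ℚ)⁻¹ • (Pi.single (Sum.inl v) 1 : V ⊕ W → ℚ)) =
      (Sum.elim (fun v => if π v = p then g v else 0) 0 : V ⊕ W → ℚ) := by
    rw [Finset.centerMass]
    rw [hsum, inv_one, one_smul]
    funext i
    rw [Finset.sum_apply]
    rcases i with v | w
    · by_cases hv : π v = p
      · have hvt : v ∈ t := by simp [ht, hv]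
        rw [Finset.sum_eq_single v]
        · have hne : (μ v : ℚ) ≠ 0 := by exact_mod_cast (hμ v).ne'
          simp only [Sum.elim_inl, if_pos hv, Pi.smul_apply, smul_eq_mul,
            Pi.single_eq_same, mul_one]
          field_simp
          try ring
        · intro u _ hu
          simp [Pi.single_apply, Sum.inl.injEq, hu]
        · intro h; exact absurd hvt h
      · rw [Finset.sum_eq_zero]
        · simp [hv]
        · intro u hu
          have : π u = p := by simpa [ht] using hu
          have huv : u ≠ v := fun h => hv (h ▸ this)
          simp [Pi.single_apply, Sum.inl.injEq, huv.symm]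
    · rw [Finset.sum_eq_zero]
      · simp
      · intro u _
        simp [Pi.single_apply]
  rwa [heq] at hmem

end Helpers

/-- With `Δ_p^c = conv{e(v)/μ(v) : π(v) = p}` in `ℚ^{V⊔W}` and
`σ = ℚ_{≥0}·(∑_p Δ_p^c) + ℚ^W_{≥0}`, and `p₀ ∈ P` fixed (`|P| ≥ 2`), a
componentwise-nonnegative vector `x` satisfies: the weighted fiber sums over `q ≠ p₀`
take a common value `c` while the fiber sum over `p₀` equals `c + 1`, if and only if
`x ∈ Δ_{p₀}^c + σ`; i.e. `Δ_{p₀}^c + σ = Q⁻¹(ē(p₀)) ∩ ℚ^{V⊔W}_{≥0}`. -/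
theorem coefficient_polyhedron_eq_fiber_sums
    (P V W : Type) [Fintype P] [Fintype V] [Fintype W]
    [DecidableEq P] [DecidableEq V] [DecidableEq W]
    (hP : 2 ≤ Fintype.card P)
    (π : V → P) (hπ : Function.Surjective π)
    (μ : V → ℕ) (hμ : ∀ v, 0 < μ v)
    (p₀ : P)
    (x : V ⊕ W → ℚ) (hx : ∀ i, 0 ≤ x i) :
    (∃ c : ℚ,
        (∀ q : P, q ≠ p₀ →
          (∑ v ∈ univ.filter (fun v => π v = q), (μ v : ℚ) * x (Sum.inl v)) = c) ∧
        (∑ v ∈ univ.filter (fun v => π v = p₀), (μ v : ℚ) * x (Sum.inl v)) = c + 1) ↔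
      (∃ (y₀ : V ⊕ W → ℚ) (lam : ℚ) (y : P → (V ⊕ W → ℚ)) (z : V ⊕ W → ℚ),
        y₀ ∈ convexHull ℚ
          ((fun v : V => (μ v : ℚ)⁻¹ • (Pi.single (Sum.inl v) 1 : V ⊕ W → ℚ)) ''
            {v : V | π v = p₀}) ∧
        0 ≤ lam ∧
        (∀ p : P, y p ∈ convexHull ℚ
          ((fun v : V => (μ v : ℚ)⁻¹ • (Pi.single (Sum.inl v) 1 : V ⊕ W → ℚ)) ''
            {v : V | π v = p})) ∧
        (∀ i, 0 ≤ z i) ∧ (∀ v : V, z (Sum.inl v) = 0) ∧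
        x = y₀ + lam • (∑ p : P, y p) + z) := by
  constructor
  · rintro ⟨c, hc, hc0⟩
    -- c ≥ 0
    obtain ⟨q₁, hq₁⟩ := Fintype.exists_ne_of_one_lt_card (by omega) p₀
    have hcnn : 0 ≤ c := by
      rw [← hc q₁ hq₁]
      exact Finset.sum_nonneg fun v _ => mul_nonneg (by positivity) (hx _)
    have hc1 : (0 : ℚ) < c + 1 := by linarith
    -- the section of π
    have sec : ∀ p : P, ∃ v, π v = p := hπ
    -- y₀
    set y₀ : V ⊕ W → ℚ :=
      Sum.elim (fun v => if π v = p₀ then x (Sum.inl v) / (c + 1) else 0) 0 with hy₀def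
    have hy₀ : y₀ ∈ convexHull ℚ
        ((fun v : V => (μ v : ℚ)⁻¹ • (Pi.single (Sum.inl v) 1 : V ⊕ W → ℚ)) ''
          {v : V | π v = p₀}) := by
      apply mem_hull_of_weights π μ hμ p₀
      · intro v; exact div_nonneg (hx _) hc1.le
      · have heq : ∑ v ∈ univ.filter (fun v => π v = p₀),
            (μ v : ℚ) * (x (Sum.inl v) / (c + 1))
            = (∑ v ∈ univ.filter (fun v => π v = p₀), (μ v : ℚ) * x (Sum.inl v)) / (c + 1) := by
          rw [Finset.sum_div]
          exact Finset.sum_congr rfl fun v _ => (mul_div_assoc _ _ _).symm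
        rw [heq, hc0, div_self hc1.ne']
    -- y, by cases on c
    by_cases hc' : c = 0
    · -- lam = 0, y p arbitrary points
      refine ⟨y₀, 0, fun p => (μ (sec p).choose : ℚ)⁻¹ •
        (Pi.single (Sum.inl (sec p).choose) 1 : V ⊕ W → ℚ),
        Sum.elim 0 (fun w => x (Sum.inr w)), hy₀, le_refl 0, ?_, ?_, ?_, ?_⟩
      · intro p
        exact subset_convexHull ℚ _ ⟨(sec p).choose, (sec p).choose_spec, rfl⟩
      · rintro (v | w) <;> simp [hx]
      · intro v; simp
      · funext i
        rcases i with v | w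
        · simp only [Pi.add_apply, zero_smul, add_zero, Pi.zero_apply, Sum.elim_inl,
            hy₀def, hc']
          by_cases hv : π v = p₀
          · simp [hv]
          · -- x (inl v) = 0 since fiber sum over π v is c = 0 and all terms nonneg
            have hq := hc (π v) hv
            rw [hc'] at hq
            have : ∀ u ∈ univ.filter (fun u => π u = π v), (0:ℚ) ≤ (μ u : ℚ) * x (Sum.inl u) :=
              fun u _ => mul_nonneg (by positivity) (hx _)
            have hz := (Finset.sum_eq_zero_iff_of_nonneg this).mp hq v (by simp)
            have hne : (μ v : ℚ) ≠ 0 := by exact_mod_cast (hμ v).ne'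
            have : x (Sum.inl v) = 0 := by
              rcases mul_eq_zero.mp hz with h | h
              · exact absurd h hne
              · exact h
            simp [hv, this]
        · simp [hy₀def]
    · -- c > 0
      have hcpos : 0 < c := lt_of_le_of_ne hcnn (Ne.symm hc')
      set y : P → (V ⊕ W → ℚ) := fun p =>
        if p = p₀ then y₀
        else Sum.elim (fun v => if π v = p then x (Sum.inl v) / c else 0) 0 with hydef
      refine ⟨y₀, c, y, Sum.elim 0 (fun w => x (Sum.inr w)), hy₀, hcnn, ?_, ?_, ?_, ?_⟩
      · intro p
        by_cases hp : p = p₀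
        · rw [hydef]; simp only [hp, if_pos rfl]; exact hy₀
        · rw [hydef]; simp only [if_neg hp]
          apply mem_hull_of_weights π μ hμ p
          · intro v; exact div_nonneg (hx _) hcpos.le
          · have heq : ∑ v ∈ univ.filter (fun v => π v = p),
                (μ v : ℚ) * (x (Sum.inl v) / c)
                = (∑ v ∈ univ.filter (fun v => π v = p), (μ v : ℚ) * x (Sum.inl v)) / c := by
              rw [Finset.sum_div]
              exact Finset.sum_congr rfl fun v _ => (mul_div_assoc _ _ _).symm
            rw [heq, hc p hp, div_self hcpos.ne']
      · rintro (v | w) <;> simp [hx]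
      · intro v; simp
      · funext i
        rcases i with v | w
        · simp only [Pi.add_apply, Pi.smul_apply, Finset.sum_apply, smul_eq_mul,
            Sum.elim_inl, Pi.zero_apply, add_zero]
          have hsum : ∑ p : P, y p (Sum.inl v) =
              y₀ (Sum.inl v) + (if π v = p₀ then 0 else x (Sum.inl v) / c) := by
            rw [Finset.sum_eq_add_sum_sdiff_singleton_of_mem (Finset.mem_univ (π v))]
            have h1 : y (π v) (Sum.inl v) =
                y₀ (Sum.inl v) + (if π v = p₀ then 0 else x (Sum.inl v) / c) -
                  (if π v = p₀ then 0 else 0) := by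
              by_cases hv : π v = p₀
              · rw [hydef]; simp [hv, hy₀def]
              · rw [hydef]; simp [hv, hy₀def]
            have h2 : ∑ p ∈ univ \ {π v}, y p (Sum.inl v) = if π v = p₀ then 0 else 0 := by
              rw [Finset.sum_eq_zero]
              · simp
              · intro p hp
                have hpv : p ≠ π v := by
                  rw [Finset.mem_sdiff, Finset.mem_singleton] at hp; exact hp.2
                rw [hydef]
                by_cases hp0 : p = p₀
                · have hvne : π v ≠ p₀ := fun h => hpv (hp0.trans h.symm)
                  simp [hp0, hy₀def, hvne]
                · simp [hp0, Ne.symm hpv]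
            rw [h1, h2]; ring
          rw [hsum]
          by_cases hv : π v = p₀
          · simp only [hv, if_pos rfl, hy₀def, Sum.elim_inl, if_pos rfl, ↓reduceIte]
            field_simp
            try ring
          · simp only [hv, if_neg hv, hy₀def, Sum.elim_inl, if_neg hv, ↓reduceIte]
            field_simp
            ring
        · simp only [Pi.add_apply, Pi.smul_apply, Finset.sum_apply, smul_eq_mul,
            Sum.elim_inr, Pi.zero_apply, hy₀def]
          rw [Finset.sum_eq_zero]
          · simp
          · intro p _
            rw [hydef]
            by_cases hp : p = p₀ <;> simp [hp, hy₀def]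
  · rintro ⟨y₀, lam, y, z, hy₀, hlam, hy, hznn, hzV, hxeq⟩
    refine ⟨lam, ?_, ?_⟩
    · intro q hq
      have : fiberSum (W := W) π μ q x = lam := by
        rw [hxeq]
        rw [map_add, map_add, map_smul, map_sum]
        have h0 : fiberSum (W := W) π μ q y₀ = 0 := by
          rw [fiberSum_hull (W := W) π μ hμ p₀ q hy₀, if_neg (fun h => hq h.symm)]
        have hz0 : fiberSum (W := W) π μ q z = 0 := by
          simp only [fiberSum, LinearMap.coe_mk, AddHom.coe_mk]
          exact Finset.sum_eq_zero fun v _ => by rw [hzV v, mul_zero]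
        have hsum : ∑ p : P, fiberSum (W := W) π μ q (y p) = 1 := by
          rw [Finset.sum_congr rfl (fun p _ => fiberSum_hull (W := W) π μ hμ p q (hy p))]
          simp
        rw [h0, hz0, hsum]
        simp
      simpa [fiberSum] using this
    · have : fiberSum (W := W) π μ p₀ x = lam + 1 := by
        rw [hxeq]
        rw [map_add, map_add, map_smul, map_sum]
        have h0 : fiberSum (W := W) π μ p₀ y₀ = 1 := by
          rw [fiberSum_hull (W := W) π μ hμ p₀ p₀ hy₀, if_pos rfl]
        have hz0 : fiberSum (W := W) π μ p₀ z = 0 := by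
          simp only [fiberSum, LinearMap.coe_mk, AddHom.coe_mk]
          exact Finset.sum_eq_zero fun v _ => by rw [hzV v, mul_zero]
        have hsum : ∑ p : P, fiberSum (W := W) π μ p₀ (y p) = 1 := by
          rw [Finset.sum_congr rfl (fun p _ => fiberSum_hull (W := W) π μ hμ p p₀ (hy p))]
          simp
        rw [h0, hz0, hsum]
        simp [add_comm]
      simpa [fiberSum] using this
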